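/- Let f : ℝⁿ → ℝ have L_f-Lipschitz gradient and each component c_i : ℝⁿ → ℝ have L_{c_i}-Lipschitz gradient. Then the ℓ₁-merit function φ(x;ρ) = f(x) + ρ‖c(x)‖₁ satisfies, for any x, s with c'(x)s = -c(x) and α ∈ [0,1]: φ(x+αs;ρ) ≤ φ(x;ρ) + α D(φ(x;ρ);s) + (α²/2)(L_f + ρ ∑ᵢ L_{c_i})‖s‖². -/

import Mathlib

lemma quad_bound {E : Type*} [NormedAddCommGroup E] [NormedSpace ℝ E]
    (g : E → ℝ) (g' : E → E →L[ℝ] ℝ)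
    (hg : ∀ y, HasFDerivAt g (g' y) y)
    (L : ℝ) (hL : ∀ y z, ‖g' y - g' z‖ ≤ L * ‖y - z‖)
    (x s : E) (α : ℝ) (hα : 0 ≤ α) :
    |g (x + α • s) - g x - α * g' x s| ≤ L / 2 * α ^ 2 * ‖s‖ ^ 2 := by
  by_cases hs : s = 0
  · simp [hs]
  have hsn : (0:ℝ) < ‖s‖ := norm_pos_iff.mpr hs
  have hL0 : 0 ≤ L := by
    have h := hL (x + s) x
    simp only [add_sub_cancel_left] at h
    nlinarith [norm_nonneg (g' (x + s) - g' x)]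
  set h' : ℝ → ℝ := fun t => g' (x + t • s) s with hh'
  -- a Lipschitz estimate for h'
  have hlip : ∀ u t : ℝ, |h' u - h' t| ≤ L * ‖s‖ ^ 2 * |u - t| := by
    intro u t
    have h3 : |(g' (x + u • s) - g' (x + t • s)) s| ≤
        ‖g' (x + u • s) - g' (x + t • s)‖ * ‖s‖ :=
      (g' (x + u • s) - g' (x + t • s)).le_opNorm s
    have h4 : ‖g' (x + u • s) - g' (x + t • s)‖ ≤ L * (|u - t| * ‖s‖) := by
      have := hL (x + u • s) (x + t • s)
      have he : x + u • s - (x + t • s) = (u - t) • s := by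
        rw [sub_smul]; abel
      rw [he, norm_smul, Real.norm_eq_abs] at this
      linarith
    have h5 : h' u - h' t = (g' (x + u • s) - g' (x + t • s)) s := by
      simp [hh']
    rw [h5]
    calc |(g' (x + u • s) - g' (x + t • s)) s|
        ≤ ‖g' (x + u • s) - g' (x + t • s)‖ * ‖s‖ := h3
      _ ≤ L * (|u - t| * ‖s‖) * ‖s‖ :=
          mul_le_mul_of_nonneg_right h4 (norm_nonneg s)
      _ = L * ‖s‖ ^ 2 * |u - t| := by ring
  have hcont : Continuous h' := by
    have : LipschitzWith ⟨L * ‖s‖ ^ 2, by positivity⟩ h' := by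
      apply LipschitzWith.of_dist_le_mul
      intro u t
      rw [Real.dist_eq, Real.dist_eq]; exact hlip u t
    exact this.continuous
  have hder : ∀ t : ℝ, HasDerivAt (fun t => g (x + t • s)) (h' t) t := by
    intro t
    have h1 : HasDerivAt (fun t : ℝ => x + t • s) s t := by
      simpa using ((hasDerivAt_id t).smul_const s).const_add x
    exact (hg (x + t • s)).comp_hasDerivAt t h1
  have hint : ∫ t in (0:ℝ)..α, h' t = g (x + α • s) - g x := by
    have := intervalIntegral.integral_eq_sub_of_hasDerivAt
      (f := fun t => g (x + t • s)) (f' := h')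
      (fun t _ => hder t) (hcont.intervalIntegrable 0 α)
    simpa using this
  have hk0 : h' 0 = g' x s := by simp [hh']
  have hkey : g (x + α • s) - g x - α * g' x s = ∫ t in (0:ℝ)..α, (h' t - h' 0) := by
    rw [intervalIntegral.integral_sub (hcont.intervalIntegrable _ _)
      intervalIntegrable_const, hint, hk0]
    simp
  rw [hkey]
  have hbound : ∀ t ∈ Set.Icc (0:ℝ) α, |h' t - h' 0| ≤ L * ‖s‖ ^ 2 * t := by
    intro t ht
    have := hlip t 0
    rw [sub_zero, abs_of_nonneg ht.1] at this
    exact this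
  calc |∫ t in (0:ℝ)..α, (h' t - h' 0)|
      ≤ ∫ t in (0:ℝ)..α, |h' t - h' 0| :=
        intervalIntegral.abs_integral_le_integral_abs hα
    _ ≤ ∫ t in (0:ℝ)..α, L * ‖s‖ ^ 2 * t := by
        apply intervalIntegral.integral_mono_on hα
        · exact ((hcont.sub continuous_const).abs).intervalIntegrable 0 α
        · exact (continuous_const.mul continuous_id).intervalIntegrable 0 α
        · exact hbound
    _ = L * ‖s‖ ^ 2 * (α ^ 2 / 2) := by
        rw [intervalIntegral.integral_const_mul, integral_id]; ring
    _ = L / 2 * α ^ 2 * ‖s‖ ^ 2 := by ring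

open Matrix

/-- quadratic upper bound for the ℓ₁-merit function along a
linearized-feasible direction, with constant `L_f + ρ ∑ᵢ L_{c_i}`. -/
theorem merit_quadratic_upper_bound {n m : ℕ}
    (f : EuclideanSpace ℝ (Fin n) → ℝ)
    (c : EuclideanSpace ℝ (Fin n) → (Fin m → ℝ))
    (f' : EuclideanSpace ℝ (Fin n) → (EuclideanSpace ℝ (Fin n) →L[ℝ] ℝ))
    (c' : Fin m → EuclideanSpace ℝ (Fin n) → (EuclideanSpace ℝ (Fin n) →L[ℝ] ℝ))
    (hf : ∀ y, HasFDerivAt f (f' y) y)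
    (hc : ∀ i y, HasFDerivAt (fun z => c z i) (c' i y) y)
    (Lf : ℝ) (Lc : Fin m → ℝ)
    (hLf : ∀ y z, ‖f' y - f' z‖ ≤ Lf * ‖y - z‖)
    (hLc : ∀ i y z, ‖c' i y - c' i z‖ ≤ Lc i * ‖y - z‖)
    (ρ : ℝ) (hρ : 0 < ρ)
    (x s : EuclideanSpace ℝ (Fin n))
    (hlin : ∀ i, c' i x s = -(c x i)) :
    ∀ α ∈ Set.Icc (0 : ℝ) 1,
      f (x + α • s) + ρ * ∑ i, |c (x + α • s) i| ≤
        (f x + ρ * ∑ i, |c x i|)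
        + α * (f' x s - ρ * ∑ i, |c x i|)
        + α ^ 2 / 2 * (Lf + ρ * ∑ i, Lc i) * ‖s‖ ^ 2 := by
  intro α hα
  obtain ⟨hα0, hα1⟩ := hα
  -- bound for f
  have hfb : f (x + α • s) ≤ f x + α * f' x s + Lf / 2 * α ^ 2 * ‖s‖ ^ 2 := by
    have := quad_bound f f' hf Lf hLf x s α hα0
    have := abs_le.mp this
    linarith [this.2]
  -- bound for each c i
  have hcb : ∀ i, |c (x + α • s) i| ≤
      (1 - α) * |c x i| + Lc i / 2 * α ^ 2 * ‖s‖ ^ 2 := by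
    intro i
    have hq := quad_bound (fun z => c z i) (c' i) (hc i) (Lc i) (hLc i) x s α hα0
    have h1 : |c (x + α • s) i - (c x i + α * c' i x s)| ≤
        Lc i / 2 * α ^ 2 * ‖s‖ ^ 2 := by
      have : c (x + α • s) i - c x i - α * c' i x s
          = c (x + α • s) i - (c x i + α * c' i x s) := by ring
      rwa [this] at hq
    have h2 : c x i + α * c' i x s = (1 - α) * c x i := by
      rw [hlin i]; ring
    have h3 : |c (x + α • s) i| ≤ |c x i + α * c' i x s| + Lc i / 2 * α ^ 2 * ‖s‖ ^ 2 := by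
      have := abs_sub_abs_le_abs_sub (c (x + α • s) i) (c x i + α * c' i x s)
      linarith
    rw [h2, abs_mul, abs_of_nonneg (by linarith : (0:ℝ) ≤ 1 - α)] at h3
    exact h3
  -- sum the constraint bounds
  have hsum : ∑ i, |c (x + α • s) i| ≤
      (1 - α) * ∑ i, |c x i| + α ^ 2 / 2 * ‖s‖ ^ 2 * ∑ i, Lc i := by
    calc ∑ i, |c (x + α • s) i|
        ≤ ∑ i, ((1 - α) * |c x i| + Lc i / 2 * α ^ 2 * ‖s‖ ^ 2) :=
          Finset.sum_le_sum fun i _ => hcb i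
      _ = (1 - α) * ∑ i, |c x i| + α ^ 2 / 2 * ‖s‖ ^ 2 * ∑ i, Lc i := by
          rw [Finset.sum_add_distrib, ← Finset.mul_sum]
          congr 1
          rw [Finset.mul_sum]
          exact Finset.sum_congr rfl fun i _ => by ring
  have hsum' : ρ * ∑ i, |c (x + α • s) i| ≤
      ρ * ((1 - α) * ∑ i, |c x i| + α ^ 2 / 2 * ‖s‖ ^ 2 * ∑ i, Lc i) :=
    mul_le_mul_of_nonneg_left hsum (le_of_lt hρ)
  have hid : (f x + ρ * ∑ i, |c x i|)
        + α * (f' x s - ρ * ∑ i, |c x i|)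
        + α ^ 2 / 2 * (Lf + ρ * ∑ i, Lc i) * ‖s‖ ^ 2
      = (f x + α * f' x s + Lf / 2 * α ^ 2 * ‖s‖ ^ 2)
        + ρ * ((1 - α) * ∑ i, |c x i| + α ^ 2 / 2 * ‖s‖ ^ 2 * ∑ i, Lc i) := by
    ring
  linarith
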